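/- Let (A, q) be a pair where A is a finite abelian group and q: A → ℂ× is a function constant on the non-trivial elements with common value ω, satisfying q(a^j) = q(a)^{j²} for all a and j, and |Σ_{a∈A} q(a)|² = |A|. If |A| ≥ 3, then A ≅ Z/2Z ⊕ Z/2Z with ω = -1, or A ≅ Z/3Z with ω a primitive cube root of unity, provided additionally that all non-trivial elements of A have the same order (so A is elementary abelian). -/

import Mathlib

theorem stmt_11 (A : Type*) [CommGroup A] [Fintype A] (q : A → ℂ) (ω : ℂ)
    (hconst : ∀ a : A, a ≠ 1 → q a = ω)
    (hquad : ∀ (a : A) (j : ℕ), q (a ^ j) = (q a) ^ (j ^ 2))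
    (hgauss : ‖∑ a : A, q a‖ ^ 2 = (Fintype.card A : ℝ))
    (horder : ∀ a b : A, a ≠ 1 → b ≠ 1 → orderOf a = orderOf b)
    (hcard : 3 ≤ Fintype.card A) :
    (Nonempty (A ≃* Multiplicative (ZMod 2 × ZMod 2)) ∧ ω = -1) ∨
      (Nonempty (A ≃* Multiplicative (ZMod 3)) ∧ ω ≠ 1 ∧ ω ^ 3 = 1) := by
  have hnt : Nontrivial A := Fintype.one_lt_card_iff_nontrivial.mp (by omega)
  set n := Fintype.card A with hn
  classical
  have hq1 : q 1 = 1 := by simpa using hquad 1 0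
  obtain ⟨a0, ha0⟩ : ∃ a : A, a ≠ 1 := exists_ne 1
  -- ω is a root of unity
  have hroot : ω ^ (orderOf a0 ^ 2) = 1 := by
    have := hquad a0 (orderOf a0)
    rw [pow_orderOf_eq_one, hq1, hconst a0 ha0] at this
    exact this.symm
  have habs : ‖ω‖ = 1 := by
    have h1 : ‖ω‖ ^ (orderOf a0 ^ 2) = 1 := by
      rw [← norm_pow, hroot, norm_one]
    have h2 : orderOf a0 ^ 2 ≠ 0 := by
      have := orderOf_pos a0; positivity
    rcases (pow_eq_one_iff_of_ne_zero h2).mp h1 with h | h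
    · exact h
    · nlinarith [norm_nonneg ω, h.1]
  have hnormSq : ω.re ^ 2 + ω.im ^ 2 = 1 := by
    have := Complex.sq_norm ω
    rw [habs, Complex.normSq_apply] at this
    nlinarith
  -- compute the sum
  have hsum : ∑ a : A, q a = 1 + ((n : ℂ) - 1) * ω := by
    rw [← Finset.sum_compl_add_sum ({(1 : A)} : Finset A) q]
    have h1 : ∑ a ∈ ({(1 : A)} : Finset A)ᶜ, q a = ((n - 1 : ℕ) : ℂ) * ω := by
      rw [Finset.sum_congr rfl (fun a ha => hconst a (by simpa using ha))]
      simp [Finset.card_compl, hn]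
    rw [h1, Finset.sum_singleton, hq1, Nat.cast_sub (by omega)]
    push_cast; ring
  -- the Gauss sum equation
  have hkey : (1 + ((n : ℝ) - 1) * ω.re) * (1 + ((n : ℝ) - 1) * ω.re)
      + ((n : ℝ) - 1) * ω.im * (((n : ℝ) - 1) * ω.im) = n := by
    rw [hsum, Complex.sq_norm, Complex.normSq_apply] at hgauss
    simpa using hgauss
  have hN : (3 : ℝ) ≤ (n : ℝ) := by exact_mod_cast hcard
  have h5 : ((n : ℝ) - 1) * (2 * ω.re) = ((n : ℝ) - 1) * (2 - (n : ℝ)) := by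
    linear_combination hkey - ((n : ℝ) - 1) ^ 2 * hnormSq
  have hre : ω.re = (2 - (n : ℝ)) / 2 := by
    have hne : (n : ℝ) - 1 ≠ 0 := by linarith
    have := mul_left_cancel₀ hne h5
    linarith
  have hxle : ω.re ^ 2 ≤ 1 := by nlinarith
  have hn4 : n ≤ 4 := by
    have : (n : ℝ) ≤ 4 := by nlinarith
    exact_mod_cast this
  interval_cases n
  · -- n = 3
    right
    haveI : Fact (Nat.Prime 3) := ⟨by norm_num⟩
    haveI : IsCyclic A := isCyclic_of_prime_card (p := 3)
      (by rw [Nat.card_eq_fintype_card, ← hn])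
    have hω1 : ω ≠ 1 := by
      intro h
      rw [h] at hre
      norm_num [Complex.one_re] at hre
    have hω0 : ω ≠ 0 := by
      intro h; rw [h] at habs; simp at habs
    have ha2 : a0 ^ 2 ≠ 1 := by
      intro h
      have h2 : orderOf a0 ∣ 2 := orderOf_dvd_of_pow_eq_one h
      have h3 : orderOf a0 ∣ 3 := hn ▸ orderOf_dvd_card
      have h1 : orderOf a0 ∣ 1 := Nat.dvd_gcd h2 h3
      simp at h1
      exact ha0 h1
    have h4 : ω = ω ^ 4 := by
      have := hquad a0 2
      rw [hconst a0 ha0, hconst _ ha2] at this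
      simpa using this
    refine ⟨⟨mulEquivOfCyclicCardEq ?_⟩, hω1, ?_⟩
    · simp [Nat.card_eq_fintype_card, ← hn]
    · have h6 : ω * ω ^ 3 = ω * 1 := by rw [mul_one, ← pow_succ']; exact h4.symm
      exact mul_left_cancel₀ hω0 h6
  · -- n = 4
    left
    have hre4 : ω.re = -1 := by rw [hre]; norm_num
    have him : ω.im = 0 := by nlinarith
    have hωm1 : ω = -1 := by
      apply Complex.ext <;> simp [hre4, him]
    have hsq : ∀ a : A, a ^ 2 = 1 := by
      intro a
      by_contra h2
      have ha1 : a ≠ 1 := by rintro rfl; simp at h2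
      have hd : orderOf a ∣ 4 := hn ▸ orderOf_dvd_card
      have hne2 : orderOf a ≠ 2 := fun h => h2 (h ▸ pow_orderOf_eq_one a)
      have hne1 : orderOf a ≠ 1 := fun h => ha1 (orderOf_eq_one_iff.mp h)
      have hne3 : orderOf a ≠ 3 := by intro h; rw [h] at hd; norm_num at hd
      have hle : orderOf a ≤ 4 := Nat.le_of_dvd (by norm_num) hd
      have hpos := orderOf_pos a
      have h4 : orderOf a = 4 := by omega
      have hord2 : orderOf (a ^ 2) = 2 := by
        rw [orderOf_pow, h4]; norm_num
      have := horder a (a ^ 2) ha1 h2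
      rw [h4, hord2] at this
      omega
    have hexp : Monoid.exponent A = 2 := by
      have hdvd : Monoid.exponent A ∣ 2 :=
        Monoid.exponent_dvd_of_forall_pow_eq_one hsq
      rcases (Nat.dvd_prime Nat.prime_two).mp hdvd with h | h
      · exfalso
        have := Monoid.pow_exponent_eq_one a0
        rw [h, pow_one] at this
        exact ha0 this
      · exact h
    haveI : IsKleinFour A :=
      ⟨by rw [Nat.card_eq_fintype_card, ← hn], hexp⟩
    exact ⟨IsKleinFour.nonempty_mulEquiv, hωm1⟩
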